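/- In any feasible update sequence for the update flow network G(C) constructed from a 3-SAT formula C, for every round r strictly before the round in which s updates the blocking pair B and for every variable index j, at most one of the updates (w_1^j, X) and (w_1^j, X̄) has been resolved by round r. -/

import Mathlib

/-!
A formal model of congestion-free flow rerouting (network update scheduling).
An update flow network consists of a source `s`, a terminal `t`, edge
capacities, and `k` update flow pairs, each given by an old `s`-`t` path and
an update (new) `s`-`t` path (represented as lists of vertices) with a demand.
An update sequence assigns to every update `(v, i)` (vertex `v`, pair `i`) a
round; it is feasible if resolving all updates of earlier rounds together with
any subset of the current round always leaves, for every pair, a unique valid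
(capacity-respecting) transient `s`-`t` path among the active edges, and the
family of transient paths jointly respects the capacities.
-/

namespace FlowUpdate

variable {V : Type} [DecidableEq V] {k : ℕ}

/-- The edges of a path given as a list of vertices. -/
def edgesOf (p : List V) : List (V × V) := p.zip p.tail

/-- The subpath of `p` from vertex `a` to vertex `z` (inclusive). -/
def segment (p : List V) (a z : V) : List V :=
  ((p.dropWhile (fun v => decide (v ≠ a))).takeWhile (fun v => decide (v ≠ z))) ++ [z]

/-- The outgoing edge of `v` on the path `p`, if any. -/
def outEdge (p : List V) (v : V) : Option (V × V) :=
  (edgesOf p).find? (fun e => decide (e.1 = v))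

/-- An update flow network with `k` update flow pairs. -/
structure UFN (V : Type) (k : ℕ) where
  s : V
  t : V
  cap : V → V → ℕ
  old : Fin k → List V
  new : Fin k → List V
  demand : Fin k → ℕ

namespace UFN

/-- After resolving the set of updates `U`, edge `e` is active for pair `i` iff
it is an old edge whose tail is not yet updated, or a new edge whose tail is
updated. -/
def active (G : UFN V k) (U : Set (V × Fin k)) (i : Fin k) (e : V × V) : Prop :=
  (e ∈ edgesOf (G.old i) ∧ (e.1, i) ∉ U) ∨ (e ∈ edgesOf (G.new i) ∧ (e.1, i) ∈ U)

/-- `p` is a simple `s`-`t` path all of whose edges satisfy `E`. -/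
def IsPathIn (E : V × V → Prop) (s t : V) (p : List V) : Prop :=
  p.head? = some s ∧ p.getLast? = some t ∧ List.Chain' (fun u v => E (u, v)) p ∧ p.Nodup

/-- `p` respects the capacities for the demand of pair `i`. -/
def ValidPath (G : UFN V k) (i : Fin k) (p : List V) : Prop :=
  ∀ e ∈ edgesOf p, G.demand i ≤ G.cap e.1 e.2

/-- `T` is the unique valid transient path of pair `i` after resolving `U`. -/
def TransientPair (G : UFN V k) (U : Set (V × Fin k)) (i : Fin k) (T : List V) : Prop :=
  IsPathIn (G.active U i) G.s G.t T ∧ G.ValidPath i T ∧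
    ∀ p, IsPathIn (G.active U i) G.s G.t p → G.ValidPath i p → p = T

/-- After resolving `U`, every pair has a unique valid transient path, and the
family of transient paths jointly respects the capacities. -/
def TransientFamily (G : UFN V k) (U : Set (V × Fin k)) : Prop :=
  ∃ T : Fin k → List V,
    (∀ i, G.TransientPair U i (T i)) ∧
    (∀ u v : V, (∑ i : Fin k, if (u, v) ∈ edgesOf (T i) then G.demand i else 0) ≤ G.cap u v)

/-- An update sequence (an assignment of rounds to all updates) is feasible if
after resolving all updates of rounds `< r` together with any subset of the
updates of round `r`, all pairs admit a transient family. -/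
def Feasible (G : UFN V k) (R : V × Fin k → ℕ) : Prop :=
  ∀ r : ℕ, ∀ S : Set (V × Fin k), (∀ u ∈ S, R u = r) →
    G.TransientFamily ({u | R u < r} ∪ S)

/-- `p` is a simple path from the source to the terminal. -/
def IsStPath (G : UFN V k) (p : List V) : Prop :=
  p.head? = some G.s ∧ p.getLast? = some G.t ∧ p.Nodup

/-- Well-formedness of an update flow network: all old and new flows are simple
`s`-`t` paths, each pair forms a DAG, each new path respects capacities for its
own demand, and both the old family and the new family jointly respect the
capacities. -/
def WellFormed (G : UFN V k) : Prop :=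
  (∀ i, G.IsStPath (G.old i) ∧ G.IsStPath (G.new i)) ∧
  (∀ i, ∃ ord : V → ℕ, ∀ e ∈ edgesOf (G.old i) ++ edgesOf (G.new i), ord e.1 < ord e.2) ∧
  (∀ i, G.ValidPath i (G.new i)) ∧
  (∀ u v : V, (∑ i : Fin k, if (u, v) ∈ edgesOf (G.old i) then G.demand i else 0) ≤ G.cap u v) ∧
  (∀ u v : V, (∑ i : Fin k, if (u, v) ∈ edgesOf (G.new i) then G.demand i else 0) ≤ G.cap u v)

/-- The common vertices of the old and new path of pair `i`, in path order. -/
def commons (G : UFN V k) (i : Fin k) : List V :=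
  (G.old i).filter (fun v => decide (v ∈ G.new i))

/-- A block of pair `i` is a pair `(a, z)` of consecutive common vertices of the
old and new paths of `i`. -/
def IsBlock (G : UFN V k) (i : Fin k) (b : V × V) : Prop :=
  b ∈ edgesOf (G.commons i)

/-- A (candidate) block: a pair index together with its start and end vertices. -/
abbrev Blk (V : Type) (k : ℕ) := Fin k × V × V

def IsBlk (G : UFN V k) (b : Blk V k) : Prop := G.IsBlock b.1 b.2

/-- The old-path segment of a block. -/
def blkOldSeg (G : UFN V k) (b : Blk V k) : List V := segment (G.old b.1) b.2.1 b.2.2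

/-- The update-path segment of a block. -/
def blkNewSeg (G : UFN V k) (b : Blk V k) : List V := segment (G.new b.1) b.2.1 b.2.2

/-- Block `b1` depends on block `b2` (written `b1 → b2`) if they belong to
different pairs and some edge lies on `b1`'s update path and on `b2`'s old path
with capacity less than the sum of the two demands. -/
def Dep (G : UFN V k) (b1 b2 : Blk V k) : Prop :=
  G.IsBlk b1 ∧ G.IsBlk b2 ∧ b1.1 ≠ b2.1 ∧
  ∃ e : V × V, e ∈ edgesOf (G.blkNewSeg b1) ∧ e ∈ edgesOf (G.blkOldSeg b2) ∧
    G.cap e.1 e.2 < G.demand b1.1 + G.demand b2.1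

/-- The dependency graph contains a directed cycle. -/
def HasDepCycle (G : UFN V k) : Prop := ∃ b : Blk V k, Relation.TransGen G.Dep b b

/-- The number of rounds used by an update sequence. -/
def numRounds [Fintype V] (R : V × Fin k → ℕ) : ℕ :=
  (Finset.image R Finset.univ).card

/-- An update `(v, i)` is empty if `v`'s outgoing old edge and outgoing new edge
for pair `i` coincide (in particular if `v` has no outgoing edge for pair `i`). -/
def EmptyUpd (G : UFN V k) (u : V × Fin k) : Prop :=
  outEdge (G.old u.2) u.1 = outEdge (G.new u.2) u.1

instance (G : UFN V k) (u : V × Fin k) : Decidable (G.EmptyUpd u) :=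
  inferInstanceAs (Decidable (outEdge (G.old u.2) u.1 = outEdge (G.new u.2) u.1))

/-- `R` updates every block in (at most) 3 consecutive rounds: first all internal
update-path vertices of the block, then the start vertex, then all old-path-only
vertices of the block. -/
def BlockPattern (G : UFN V k) (R : V × Fin k → ℕ) : Prop :=
  ∀ b : Blk V k, G.IsBlk b → ∃ r : ℕ,
    (∀ v ∈ G.blkNewSeg b, v ≠ b.2.1 → v ≠ b.2.2 → R (v, b.1) = r) ∧
    R (b.2.1, b.1) = r + 1 ∧
    (∀ v ∈ G.blkOldSeg b, v ∉ G.new b.1 → R (v, b.1) = r + 2)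

/-- The size of the network (total length of the flow paths). -/
def size (G : UFN V k) : ℕ := ∑ i : Fin k, ((G.old i).length + (G.new i).length)

end UFN

end FlowUpdate

namespace FlowUpdate

/-! The update flow network `GC C n` constructed from a 3-SAT formula `C` with
`n` variables, as in the NP-hardness reduction.  The six flow pairs are indexed
by `Fin 6`: `0 = X`, `1 = X̄`, `2,3,4 = D₁,D₂,D₃`, `5 = B`; all have demand 1. -/

/-- A 3-SAT clause: three literals, each a variable index with a polarity. -/
abbrev Clause := Fin 3 → ℕ × Bool

/-- `σ` satisfies the formula `C`. -/
def Satisfies (C : List Clause) (σ : ℕ → Bool) : Prop :=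
  ∀ cl ∈ C, ∃ p : Fin 3, σ (cl p).1 = (cl p).2

/-- All variable indices occurring in `C` are `< n`. -/
def GoodFormula (C : List Clause) (n : ℕ) : Prop :=
  ∀ cl ∈ C, ∀ p : Fin 3, (cl p).1 < n

/-- The vertices of the network `GC C n`. -/
inductive GV where
  | s | t
  | u (i : ℕ) | v (i : ℕ)
  | uu (i : ℕ) (j : Fin 3) | vv (i : ℕ) (j : Fin 3)
  | w1 (j : ℕ) | w2 (j : ℕ)
deriving DecidableEq

/-- Capacities: `(w1 j, w2 j)` has capacity 2, `(u i, v i)` capacity 3, the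
detour edges `(uu i p, vv i p)` capacity 1, all other edges capacity 6. -/
def capC : GV → GV → ℕ
  | .w1 j, .w2 j' => if j = j' then 2 else 6
  | .u i, .v i' => if i = i' then 3 else 6
  | .uu i p, .vv i' p' => if i = i' ∧ p = p' then 1 else 6
  | _, _ => 6

/-- The occurrences (clause index, position) of the literal `(j, pol)` in `C`. -/
def occ (C : List Clause) (j : ℕ) (pol : Bool) : List (ℕ × Fin 3) :=
  (List.range C.length).flatMap fun i =>
    (List.finRange 3).filterMap fun p =>
      if (C.getD i (fun _ => (0, true))) p = (j, pol) then some (i, p) else none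

/-- The detour vertices visited by the old path of the literal `(j, pol)`. -/
def litPath (C : List Clause) (j : ℕ) (pol : Bool) : List GV :=
  (occ C j pol).flatMap fun ip => [GV.uu ip.1 ip.2, GV.vv ip.1 ip.2]

/-- The old path of `X` (`pol = true`) resp. of `X̄` (`pol = false`). -/
def Xold (C : List Clause) (n : ℕ) (pol : Bool) : List GV :=
  [GV.s] ++ ((List.range n).flatMap fun j => [GV.w1 j] ++ litPath C j pol ++ [GV.w2 j]) ++ [GV.t]

/-- The update path of `X` and `X̄`, which is also the old path of `B`. -/
def Xupd (n : ℕ) : List GV :=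
  [GV.s] ++ ((List.range n).flatMap fun j => [GV.w1 j, GV.w2 j]) ++ [GV.t]

/-- The old path of each `D_j`, which is also the update path of `B`. -/
def Dold (m : ℕ) : List GV :=
  [GV.s] ++ ((List.range m).flatMap fun i => [GV.u i, GV.v i]) ++ [GV.t]

/-- The update path of `D_j`, detouring each clause edge through `(uu i j, vv i j)`. -/
def Dupd (m : ℕ) (j : Fin 3) : List GV :=
  [GV.s] ++ ((List.range m).flatMap fun i => [GV.u i, GV.uu i j, GV.vv i j, GV.v i]) ++ [GV.t]

/-- The update flow network constructed from the 3-SAT formula `C` with `n`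
variables. -/
def GC (C : List Clause) (n : ℕ) : UFN GV 6 where
  s := GV.s
  t := GV.t
  cap := capC
  old := ![Xold C n true, Xold C n false, Dold C.length, Dold C.length, Dold C.length, Xupd n]
  new := ![Xupd n, Xupd n, Dupd C.length 0, Dupd C.length 1, Dupd C.length 2, Dold C.length]
  demand := fun _ => 1

end FlowUpdate


namespace FlowUpdate

/-! ### Auxiliary lemmas for the proof of `stmt9` -/

section Aux

variable {W : Type}

lemma forall_mem_edgesOf {R : W → W → Prop} :
    ∀ {p : List W}, List.Chain' R p → ∀ e ∈ edgesOf p, R e.1 e.2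
  | [], _, e, he => by simp [edgesOf] at he
  | [a], _, e, he => by simp [edgesOf] at he
  | a :: b :: l, h, e, he => by
    simp only [List.Chain'] at h
    rw [List.isChain_cons_cons] at h
    rw [show edgesOf (a :: b :: l) = (a, b) :: edgesOf (b :: l) from rfl,
      List.mem_cons] at he
    rcases he with rfl | he
    · exact h.1
    · exact forall_mem_edgesOf h.2 e he

lemma mem_of_edge {p : List W} {e : W × W} (h : e ∈ edgesOf p) : e.2 ∈ p := by
  obtain ⟨e1, e2⟩ := e
  exact List.mem_of_mem_tail (List.of_mem_zip h).2

lemma exists_cross (ord : W → ℕ) (τ : ℕ) :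
    ∀ {p : List W} {a b : W}, p.head? = some a → p.getLast? = some b →
      ord a < τ → τ ≤ ord b → ∃ e ∈ edgesOf p, ord e.1 < τ ∧ τ ≤ ord e.2
  | [], a, b, ha, hb, _, _ => by simp at ha
  | [x], a, b, ha, hb, h1, h2 => by
    simp only [List.head?_cons, Option.some.injEq] at ha
    simp only [List.getLast?_singleton, Option.some.injEq] at hb
    subst ha; subst hb; omega
  | x :: y :: l, a, b, ha, hb, h1, h2 => by
    simp only [List.head?_cons, Option.some.injEq] at ha
    subst ha
    by_cases hy : τ ≤ ord y
    · exact ⟨(x, y), by simp [edgesOf], h1, hy⟩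
    · push_neg at hy
      have hb' : (y :: l).getLast? = some b := by
        rwa [List.getLast?_cons_cons] at hb
      obtain ⟨e, he, h3, h4⟩ := exists_cross ord τ (p := y :: l) rfl hb' hy h2
      exact ⟨e, by
        rw [show edgesOf (x :: y :: l) = (x, y) :: edgesOf (y :: l) from rfl]
        exact List.mem_cons_of_mem _ he, h3, h4⟩

lemma exists_succ [DecidableEq W] :
    ∀ {p : List W} {x b : W}, x ∈ p → p.getLast? = some b → x ≠ b →
      ∃ y, (x, y) ∈ edgesOf p
  | [], x, b, hx, _, _ => by simp at hx
  | [a], x, b, hx, hb, hxb => by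
    simp only [List.mem_singleton] at hx
    simp only [List.getLast?_singleton, Option.some.injEq] at hb
    subst hx; subst hb; exact absurd rfl hxb
  | a :: c :: l, x, b, hx, hb, hxb => by
    rcases List.mem_cons.mp hx with rfl | hx'
    · exact ⟨c, by simp [edgesOf]⟩
    · have hb' : (c :: l).getLast? = some b := by
        rwa [List.getLast?_cons_cons] at hb
      obtain ⟨y, hy⟩ := exists_succ hx' hb' hxb
      exact ⟨y, by
        rw [show edgesOf (a :: c :: l) = (a, c) :: edgesOf (c :: l) from rfl]
        exact List.mem_cons_of_mem _ hy⟩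

lemma chain'_flat_aux (R : W → W → Prop) (s : W) (f : ℕ → List W)
    (hne : ∀ i, f i ≠ [])
    (hblk : ∀ i, List.Chain' R (f i))
    (hstart : ∀ x, (f 0).head? = some x → R s x)
    (hlink : ∀ i x y, (f i).getLast? = some x → (f (i + 1)).head? = some y → R x y) :
    ∀ n, 0 < n → List.Chain' R (s :: (List.range n).flatMap f) ∧
      (s :: (List.range n).flatMap f).getLast? = (f (n - 1)).getLast? := by
  intro n
  induction n with
  | zero => omega
  | succ m ih =>
    intro _
    rcases Nat.eq_zero_or_pos m with rfl | hm
    · have h1 : (List.range 1).flatMap f = f 0 := by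
        simp [List.range_succ]
      rw [h1]
      constructor
      · simp only [List.Chain']
        rw [List.isChain_cons]
        exact ⟨fun y hy => hstart y hy, hblk 0⟩
      · exact List.getLast?_append_of_ne_nil [s] (hne 0)
    · obtain ⟨hc, hl⟩ := ih hm
      have h1 : (List.range (m + 1)).flatMap f = (List.range m).flatMap f ++ f m := by
        rw [List.range_succ, List.flatMap_append]; simp
      rw [h1]
      have h2 : s :: ((List.range m).flatMap f ++ f m)
          = (s :: (List.range m).flatMap f) ++ f m := rfl
      rw [h2]
      constructor
      · simp only [List.Chain']
        rw [List.isChain_append]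
        refine ⟨hc, hblk m, ?_⟩
        intro x hx y hy
        rw [hl] at hx
        have hx' : (f (m - 1)).getLast? = some x := hx
        have hy' : (f m).head? = some y := hy
        have := hlink (m - 1) x y hx'
        rw [show m - 1 + 1 = m from by omega] at this
        exact this hy'
      · rw [List.getLast?_append_of_ne_nil _ (hne m), Nat.add_sub_cancel]

lemma chain'_pattern (R : W → W → Prop) (s t : W) (f : ℕ → List W) (n : ℕ)
    (hne : ∀ i, f i ≠ [])
    (hblk : ∀ i, List.Chain' R (f i))
    (hstart : ∀ x, (f 0).head? = some x → R s x)
    (hlink : ∀ i x y, (f i).getLast? = some x → (f (i + 1)).head? = some y → R x y)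
    (hend : ∀ x, 0 < n → (f (n - 1)).getLast? = some x → R x t)
    (hst : n = 0 → R s t) :
    List.Chain' R (s :: ((List.range n).flatMap f ++ [t])) := by
  rcases Nat.eq_zero_or_pos n with rfl | hn
  · simpa [List.Chain', List.isChain_pair] using hst rfl
  · obtain ⟨hc, hl⟩ := chain'_flat_aux R s f hne hblk hstart hlink n hn
    rw [show s :: ((List.range n).flatMap f ++ [t])
        = (s :: (List.range n).flatMap f) ++ [t] from rfl, List.Chain', List.isChain_append]
    refine ⟨hc, List.isChain_singleton t, ?_⟩
    intro x hx y hy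
    rw [hl] at hx
    simp only [List.head?_cons, Option.mem_def, Option.some.injEq] at hy
    subst hy
    exact hend x hn hx

end Aux

/-! ### Orderings on the vertices of `GC C n` -/

/-- A position function for the paths of the pairs `X` and `X̄`. -/
def ordX (C : List Clause) (n : ℕ) : GV → ℕ
  | GV.s => 0
  | GV.t => (10 * C.length + 10) * n + 1
  | GV.u _ => 0
  | GV.v _ => 0
  | GV.uu i p => (10 * C.length + 10) * ((C.getD i (fun _ => (0, true))) p).1
      + 2 * (3 * i + p.val) + 2
  | GV.vv i p => (10 * C.length + 10) * ((C.getD i (fun _ => (0, true))) p).1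
      + 2 * (3 * i + p.val) + 3
  | GV.w1 j => (10 * C.length + 10) * j + 1
  | GV.w2 j => (10 * C.length + 10) * j + (10 * C.length + 9)

/-- A position function for the paths of the pair `B`. -/
def ord5 (n : ℕ) : GV → ℕ
  | GV.s => 0
  | GV.t => 2 * n + 1
  | GV.u _ => 2 * n + 1
  | GV.v _ => 2 * n + 1
  | GV.uu _ _ => 0
  | GV.vv _ _ => 0
  | GV.w1 j => 2 * j + 1
  | GV.w2 j => 2 * j + 2


lemma ordX_s (C : List Clause) (n : ℕ) : ordX C n GV.s = 0 := rfl
lemma ordX_t (C : List Clause) (n : ℕ) : ordX C n GV.t = (10 * C.length + 10) * n + 1 := rfl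
lemma ordX_w1 (C : List Clause) (n j : ℕ) :
    ordX C n (GV.w1 j) = (10 * C.length + 10) * j + 1 := rfl
lemma ordX_w2 (C : List Clause) (n j : ℕ) :
    ordX C n (GV.w2 j) = (10 * C.length + 10) * j + (10 * C.length + 9) := rfl
lemma ordX_uu (C : List Clause) (n i : ℕ) (p : Fin 3) :
    ordX C n (GV.uu i p) = (10 * C.length + 10) * ((C.getD i (fun _ => (0, true))) p).1
      + 2 * (3 * i + p.val) + 2 := rfl
lemma ordX_vv (C : List Clause) (n i : ℕ) (p : Fin 3) :
    ordX C n (GV.vv i p) = (10 * C.length + 10) * ((C.getD i (fun _ => (0, true))) p).1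
      + 2 * (3 * i + p.val) + 3 := rfl

lemma ord5_s (n : ℕ) : ord5 n GV.s = 0 := rfl
lemma ord5_t (n : ℕ) : ord5 n GV.t = 2 * n + 1 := rfl
lemma ord5_u (n i : ℕ) : ord5 n (GV.u i) = 2 * n + 1 := rfl
lemma ord5_v (n i : ℕ) : ord5 n (GV.v i) = 2 * n + 1 := rfl
lemma ord5_w1 (n j : ℕ) : ord5 n (GV.w1 j) = 2 * j + 1 := rfl
lemma ord5_w2 (n j : ℕ) : ord5 n (GV.w2 j) = 2 * j + 2 := rfl

/-- `x` lies in the `j'`-th block of the old path of `X`/`X̄`. -/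
def inBlk (C : List Clause) (n j' : ℕ) (x : GV) : Prop :=
  (10 * C.length + 10) * j' + 1 ≤ ordX C n x ∧
    ordX C n x ≤ (10 * C.length + 10) * j' + (10 * C.length + 9)

/-- Characterization of the edges of `Xupd n`. -/
def XRel (n : ℕ) (u v : GV) : Prop :=
  (u = GV.s ∧ (v = GV.w1 0 ∨ (v = GV.t ∧ n = 0))) ∨
  (∃ j', u = GV.w1 j' ∧ v = GV.w2 j') ∨
  (∃ j', u = GV.w2 j' ∧ (v = GV.w1 (j' + 1) ∨ (v = GV.t ∧ j' + 1 = n)))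

/-- Characterization of the edges of `Xold C n pol`. -/
def XORel (C : List Clause) (n : ℕ) (u v : GV) : Prop :=
  (u = GV.s ∧ (v = GV.w1 0 ∨ (v = GV.t ∧ n = 0))) ∨
  (∃ j', inBlk C n j' u ∧ inBlk C n j' v) ∨
  (∃ j', u = GV.w2 j' ∧ (v = GV.w1 (j' + 1) ∨ (v = GV.t ∧ j' + 1 = n)))

/-- Characterization of the tails of the edges of `Dold m`. -/
def DRel (u : GV) (_ : GV) : Prop :=
  u = GV.s ∨ (∃ i, u = GV.u i) ∨ (∃ i, u = GV.v i)

lemma chain'_Xupd (n : ℕ) : List.Chain' (XRel n) (Xupd n) := by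
  rw [show Xupd n
      = GV.s :: ((List.range n).flatMap (fun j => [GV.w1 j, GV.w2 j]) ++ [GV.t]) from rfl]
  apply chain'_pattern
  · intro i; simp
  · intro i
    exact List.isChain_pair.mpr (Or.inr (Or.inl ⟨i, rfl, rfl⟩))
  · intro x hx
    simp only [List.head?_cons, Option.some.injEq] at hx
    subst hx
    exact Or.inl ⟨rfl, Or.inl rfl⟩
  · intro i x y hx hy
    simp only [List.getLast?_cons_cons, List.getLast?_singleton, Option.some.injEq] at hx
    simp only [List.head?_cons, Option.some.injEq] at hy
    subst hx; subst hy
    exact Or.inr (Or.inr ⟨i, rfl, Or.inl rfl⟩)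
  · intro x hn hx
    simp only [List.getLast?_cons_cons, List.getLast?_singleton, Option.some.injEq] at hx
    subst hx
    exact Or.inr (Or.inr ⟨n - 1, rfl, Or.inr ⟨rfl, by omega⟩⟩)
  · intro hn
    exact Or.inl ⟨rfl, Or.inr ⟨rfl, hn⟩⟩

lemma chain'_Dold (m : ℕ) : List.Chain' DRel (Dold m) := by
  rw [show Dold m
      = GV.s :: ((List.range m).flatMap (fun i => [GV.u i, GV.v i]) ++ [GV.t]) from rfl]
  apply chain'_pattern
  · intro i; simp
  · intro i
    exact List.isChain_pair.mpr (Or.inr (Or.inl ⟨i, rfl⟩))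
  · intro x _; exact Or.inl rfl
  · intro i x y hx _
    simp only [List.getLast?_cons_cons, List.getLast?_singleton, Option.some.injEq] at hx
    subst hx
    exact Or.inr (Or.inr ⟨i, rfl⟩)
  · intro x hm hx
    simp only [List.getLast?_cons_cons, List.getLast?_singleton, Option.some.injEq] at hx
    subst hx
    exact Or.inr (Or.inr ⟨m - 1, rfl⟩)
  · intro _; exact Or.inl rfl

lemma mem_occ {C : List Clause} {j : ℕ} {pol : Bool} {i : ℕ} {p : Fin 3}
    (h : (i, p) ∈ occ C j pol) :
    i < C.length ∧ (C.getD i (fun _ => (0, true))) p = (j, pol) := by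
  unfold occ at h
  simp only [List.mem_flatMap, List.mem_range, List.mem_filterMap, List.mem_finRange,
    true_and] at h
  obtain ⟨i', hi', p', hp'⟩ := h
  split at hp'
  · next heq =>
    simp only [Option.some.injEq, Prod.mk.injEq] at hp'
    obtain ⟨rfl, rfl⟩ := hp'
    exact ⟨hi', heq⟩
  · simp at hp'

lemma inBlk_litPath {C : List Clause} {n j' : ℕ} {pol : Bool} {x : GV}
    (hx : x ∈ litPath C j' pol) : inBlk C n j' x := by
  unfold litPath at hx
  rw [List.mem_flatMap] at hx
  obtain ⟨⟨i, p⟩, hip, hm⟩ := hx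
  obtain ⟨hi, heq⟩ := mem_occ hip
  have hp : (p : ℕ) < 3 := p.isLt
  have h1 : ((C.getD i (fun _ => (0, true))) p).1 = j' := by rw [heq]
  simp only [List.mem_cons, List.mem_singleton, List.not_mem_nil, or_false] at hm
  rcases hm with rfl | rfl <;>
  · simp only [inBlk, ordX_s, ordX_t, ordX_w1, ordX_w2, ordX_uu, ordX_vv]
    rw [h1]
    generalize (10 * C.length + 10) * j' = A
    omega

lemma chain'_Xold (C : List Clause) (n : ℕ) (pol : Bool) :
    List.Chain' (XORel C n) (Xold C n pol) := by
  rw [show Xold C n pol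
      = GV.s :: ((List.range n).flatMap
          (fun j => GV.w1 j :: (litPath C j pol ++ [GV.w2 j])) ++ [GV.t]) from rfl]
  have hmem : ∀ j' : ℕ, ∀ x ∈ GV.w1 j' :: (litPath C j' pol ++ [GV.w2 j']),
      inBlk C n j' x := by
    intro j' x hx
    simp only [List.mem_cons, List.mem_append, List.mem_singleton,
      List.not_mem_nil, or_false] at hx
    rcases hx with rfl | hx | rfl
    · simp only [inBlk, ordX_s, ordX_t, ordX_w1, ordX_w2, ordX_uu, ordX_vv]
      generalize (10 * C.length + 10) * j' = A
      omega
    · exact inBlk_litPath hx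
    · simp only [inBlk, ordX_s, ordX_t, ordX_w1, ordX_w2, ordX_uu, ordX_vv]
      generalize (10 * C.length + 10) * j' = A
      omega
  apply chain'_pattern
  · intro i; simp
  · intro i
    exact (List.pairwise_of_forall_mem_list
      (fun a ha b hb => Or.inr (Or.inl ⟨i, hmem i a ha, hmem i b hb⟩))).isChain
  · intro x hx
    simp only [List.head?_cons, Option.some.injEq] at hx
    subst hx
    exact Or.inl ⟨rfl, Or.inl rfl⟩
  · intro i x y hx hy
    rw [show GV.w1 i :: (litPath C i pol ++ [GV.w2 i])
        = (GV.w1 i :: litPath C i pol) ++ [GV.w2 i] from rfl,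
      List.getLast?_concat] at hx
    simp only [Option.some.injEq] at hx
    simp only [List.head?_cons, Option.some.injEq] at hy
    subst hx; subst hy
    exact Or.inr (Or.inr ⟨i, rfl, Or.inl rfl⟩)
  · intro x hn hx
    rw [show GV.w1 (n - 1) :: (litPath C (n - 1) pol ++ [GV.w2 (n - 1)])
        = (GV.w1 (n - 1) :: litPath C (n - 1) pol) ++ [GV.w2 (n - 1)] from rfl,
      List.getLast?_concat] at hx
    simp only [Option.some.injEq] at hx
    subst hx
    exact Or.inr (Or.inr ⟨n - 1, rfl, Or.inr ⟨rfl, by omega⟩⟩)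
  · intro hn
    exact Or.inl ⟨rfl, Or.inr ⟨rfl, hn⟩⟩

/-! ### Crossing properties -/

lemma kle {K a b c : ℕ} (hc : c < K) (h : K * a ≤ K * b + c) : a ≤ b := by
  by_contra h'
  push_neg at h'
  have h2 : K * (b + 1) ≤ K * a := Nat.mul_le_mul_left _ h'
  rw [Nat.mul_succ] at h2
  omega

lemma XRel_cross {C : List Clause} {n j : ℕ} (hj : j < n) {u v : GV}
    (h : XRel n u v) (h1 : ordX C n u < (10 * C.length + 10) * j + 1)
    (h2 : (10 * C.length + 10) * j + 1 ≤ ordX C n v) : v = GV.w1 j := by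
  have hK : (1 : ℕ) < 10 * C.length + 10 := by omega
  rcases h with ⟨rfl, hv | ⟨rfl, hn⟩⟩ | ⟨j', rfl, rfl⟩ | ⟨j', rfl, hv | ⟨rfl, hn⟩⟩
  · subst hv
    have : j ≤ 0 := kle (K := 10 * C.length + 10) (c := 0) (by omega)
      (by simp only [ordX_s, ordX_t, ordX_w1, ordX_w2, ordX_uu, ordX_vv] at h2 ⊢; omega)
    simp [show j = 0 by omega]
  · omega
  · exfalso
    simp only [ordX_s, ordX_t, ordX_w1, ordX_w2, ordX_uu, ordX_vv] at h1 h2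
    have ha : j' < j := Nat.lt_of_mul_lt_mul_left (a := 10 * C.length + 10)
      (by omega)
    have hb : j ≤ j' := kle (K := 10 * C.length + 10) (c := 10 * C.length + 8) (by omega) (by omega)
    omega
  · subst hv
    simp only [ordX_s, ordX_t, ordX_w1, ordX_w2, ordX_uu, ordX_vv] at h1 h2
    have ha : j' + 1 ≤ j := kle (K := 10 * C.length + 10) (c := 1) (by omega)
      (by rw [Nat.mul_succ]; omega)
    have hb : j ≤ j' + 1 := kle (K := 10 * C.length + 10) (c := 0) (by omega)
      (by omega)
    rw [show j' + 1 = j by omega]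
  · exfalso
    simp only [ordX_s, ordX_t, ordX_w1, ordX_w2, ordX_uu, ordX_vv] at h1
    have ha : j' + 1 ≤ j := kle (K := 10 * C.length + 10) (c := 1) (by omega)
      (by rw [Nat.mul_succ]; omega)
    omega

lemma XORel_cross {C : List Clause} {n j : ℕ} (hj : j < n) {u v : GV}
    (h : XORel C n u v) (h1 : ordX C n u < (10 * C.length + 10) * j + 1)
    (h2 : (10 * C.length + 10) * j + 1 ≤ ordX C n v) : v = GV.w1 j := by
  rcases h with ⟨rfl, hv | ⟨rfl, hn⟩⟩ | ⟨j', hu, hv⟩ | ⟨j', rfl, hv | ⟨rfl, hn⟩⟩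
  · subst hv
    have : j ≤ 0 := kle (K := 10 * C.length + 10) (c := 0) (by omega)
      (by simp only [ordX_s, ordX_t, ordX_w1, ordX_w2, ordX_uu, ordX_vv] at h2 ⊢; omega)
    simp [show j = 0 by omega]
  · omega
  · exfalso
    obtain ⟨hu1, hu2⟩ := hu
    obtain ⟨hv1, hv2⟩ := hv
    have ha : j' < j := Nat.lt_of_mul_lt_mul_left (a := 10 * C.length + 10)
      (by omega)
    have hb : j ≤ j' := kle (K := 10 * C.length + 10) (c := 10 * C.length + 8) (by omega) (by omega)
    omega
  · subst hv
    simp only [ordX_s, ordX_t, ordX_w1, ordX_w2, ordX_uu, ordX_vv] at h1 h2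
    have ha : j' + 1 ≤ j := kle (K := 10 * C.length + 10) (c := 1) (by omega)
      (by rw [Nat.mul_succ]; omega)
    have hb : j ≤ j' + 1 := kle (K := 10 * C.length + 10) (c := 0) (by omega)
      (by omega)
    rw [show j' + 1 = j by omega]
  · exfalso
    simp only [ordX_s, ordX_t, ordX_w1, ordX_w2, ordX_uu, ordX_vv] at h1
    have ha : j' + 1 ≤ j := kle (K := 10 * C.length + 10) (c := 1) (by omega)
      (by rw [Nat.mul_succ]; omega)
    omega

lemma XRel_cross5 {n j : ℕ} (hj : j < n) {u v : GV}
    (h : XRel n u v) (h1 : ord5 n u < 2 * j + 1) (h2 : 2 * j + 1 ≤ ord5 n v) :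
    v = GV.w1 j := by
  rcases h with ⟨rfl, hv | ⟨rfl, hn⟩⟩ | ⟨j', rfl, rfl⟩ | ⟨j', rfl, hv | ⟨rfl, hn⟩⟩
  · subst hv
    simp only [ord5_s, ord5_t, ord5_u, ord5_v, ord5_w1, ord5_w2] at h2
    simp [show j = 0 by omega]
  · omega
  · exfalso; simp only [ord5_s, ord5_t, ord5_u, ord5_v, ord5_w1, ord5_w2] at h1 h2; omega
  · subst hv
    simp only [ord5_s, ord5_t, ord5_u, ord5_v, ord5_w1, ord5_w2] at h1 h2
    rw [show j' + 1 = j by omega]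
  · exfalso; simp only [ord5_s, ord5_t, ord5_u, ord5_v, ord5_w1, ord5_w2] at h1 h2; omega

lemma XRel_out {n j : ℕ} {v : GV} (h : XRel n (GV.w1 j) v) : v = GV.w2 j := by
  rcases h with ⟨hu, -⟩ | ⟨j', hu, rfl⟩ | ⟨j', hu, -⟩
  · exact absurd hu (by simp)
  · rw [GV.w1.injEq] at hu
    rw [hu]
  · exact absurd hu (by simp)

/-! ### Evaluating the network `GC` -/

lemma GC_old0 (C : List Clause) (n : ℕ) : (GC C n).old 0 = Xold C n true := rfl
lemma GC_old1 (C : List Clause) (n : ℕ) : (GC C n).old 1 = Xold C n false := rfl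
lemma GC_old5 (C : List Clause) (n : ℕ) : (GC C n).old 5 = Xupd n := rfl
lemma GC_new0 (C : List Clause) (n : ℕ) : (GC C n).new 0 = Xupd n := rfl
lemma GC_new1 (C : List Clause) (n : ℕ) : (GC C n).new 1 = Xupd n := rfl
lemma GC_new5 (C : List Clause) (n : ℕ) : (GC C n).new 5 = Dold C.length := rfl

/-! ### Key lemmas: the transient paths of `X`, `X̄`, `B` use `(w1 j, w2 j)` -/

lemma keyX {C : List Clause} {n j : ℕ} (hj : j < n) {pol : Bool}
    {U : Set (GV × Fin 6)} {i : Fin 6}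
    (hold : (GC C n).old i = Xold C n pol) (hnew : (GC C n).new i = Xupd n)
    (hUi : (GV.w1 j, i) ∈ U) {T : List GV}
    (hT : (GC C n).TransientPair U i T) :
    (GV.w1 j, GV.w2 j) ∈ edgesOf T := by
  obtain ⟨⟨hh, hl, hch, -⟩, -, -⟩ := hT
  have hact : ∀ e ∈ edgesOf T, (GC C n).active U i e := by
    intro e he
    have := forall_mem_edgesOf hch e he
    rwa [Prod.mk.eta] at this
  obtain ⟨e, he, hc1, hc2⟩ := exists_cross (ordX C n) ((10 * C.length + 10) * j + 1)
    hh hl (by show ordX C n GV.s < (10 * C.length + 10) * j + 1; rw [ordX_s]; omega) (by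
      show (10 * C.length + 10) * j + 1 ≤ ordX C n GV.t
      simp only [ordX_s, ordX_t, ordX_w1, ordX_w2, ordX_uu, ordX_vv]
      have := Nat.mul_le_mul_left (10 * C.length + 10) (Nat.le_of_lt hj)
      omega)
  have he2 : e.2 = GV.w1 j := by
    rcases hact e he with ⟨hm, -⟩ | ⟨hm, -⟩
    · rw [hold] at hm
      exact XORel_cross hj (forall_mem_edgesOf (chain'_Xold C n pol) e hm) hc1 hc2
    · rw [hnew] at hm
      exact XRel_cross hj (forall_mem_edgesOf (chain'_Xupd n) e hm) hc1 hc2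
  have hmem : GV.w1 j ∈ T := he2 ▸ mem_of_edge he
  obtain ⟨y, hy⟩ := exists_succ hmem hl (by show ¬GV.w1 j = GV.t; simp)
  rcases hact _ hy with ⟨-, hu⟩ | ⟨hm, -⟩
  · exact absurd hUi hu
  · rw [hnew] at hm
    have hy2 : y = GV.w2 j :=
      XRel_out (forall_mem_edgesOf (chain'_Xupd n) _ hm)
    rwa [hy2] at hy

lemma keyB {C : List Clause} {n j : ℕ} (hj : j < n)
    {U : Set (GV × Fin 6)}
    (hUs : (GV.s, (5 : Fin 6)) ∉ U) {T : List GV}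
    (hT : (GC C n).TransientPair U 5 T) :
    (GV.w1 j, GV.w2 j) ∈ edgesOf T := by
  obtain ⟨⟨hh, hl, hch, -⟩, -, -⟩ := hT
  have hact : ∀ e ∈ edgesOf T, (GC C n).active U 5 e := by
    intro e he
    have := forall_mem_edgesOf hch e he
    rwa [Prod.mk.eta] at this
  obtain ⟨e, he, hc1, hc2⟩ := exists_cross (ord5 n) (2 * j + 1)
    hh hl (by show ord5 n GV.s < 2 * j + 1; rw [ord5_s]; omega)
    (by show 2 * j + 1 ≤ ord5 n GV.t; rw [ord5_t]; omega)
  have he2 : e.2 = GV.w1 j := by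
    rcases hact e he with ⟨hm, -⟩ | ⟨hm, hu⟩
    · rw [GC_old5] at hm
      exact XRel_cross5 hj (forall_mem_edgesOf (chain'_Xupd n) e hm) hc1 hc2
    · rw [GC_new5] at hm
      exfalso
      have hd := forall_mem_edgesOf (chain'_Dold C.length) e hm
      rcases hd with hs | ⟨i', hi'⟩ | ⟨i', hi'⟩
      · rw [hs] at hu
        exact hUs hu
      · rw [hi'] at hc1
        simp only [ord5_s, ord5_t, ord5_u, ord5_v, ord5_w1, ord5_w2] at hc1
        omega
      · rw [hi'] at hc1
        simp only [ord5_s, ord5_t, ord5_u, ord5_v, ord5_w1, ord5_w2] at hc1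
        omega
  have hmem : GV.w1 j ∈ T := he2 ▸ mem_of_edge he
  obtain ⟨y, hy⟩ := exists_succ hmem hl (by show ¬GV.w1 j = GV.t; simp)
  rcases hact _ hy with ⟨hm, -⟩ | ⟨hm, -⟩
  · rw [GC_old5] at hm
    have hy2 : y = GV.w2 j :=
      XRel_out (forall_mem_edgesOf (chain'_Xupd n) _ hm)
    rwa [hy2] at hy
  · rw [GC_new5] at hm
    have hd := forall_mem_edgesOf (chain'_Dold C.length) _ hm
    exact absurd hd (by simp [DRel])

end FlowUpdate

open FlowUpdate in
/-- In any feasible update sequence for `G(C)`, for every round `r`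
strictly before the round in which `s` updates the blocking pair `B` and every
variable index `j`, at most one of the updates `(w1 j, X)` and `(w1 j, X̄)` has
been resolved by round `r`. -/
theorem stmt9 (C : List Clause) (n : ℕ) (hC : GoodFormula C n)
    (R : GV × Fin 6 → ℕ) (hR : (GC C n).Feasible R)
    (r : ℕ) (hr : r < R (GV.s, 5)) (j : ℕ) (hj : j < n) :
    r < R (GV.w1 j, 0) ∨ r < R (GV.w1 j, 1) := by
  by_contra hcon
  push_neg at hcon
  obtain ⟨h0, h1⟩ := hcon
  obtain ⟨T, hT, hcap⟩ := hR (r + 1) ∅ (by simp)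
  simp only [Set.union_empty] at hT hcap
  have hU0 : (GV.w1 j, (0 : Fin 6)) ∈ {u : GV × Fin 6 | R u < r + 1} := by
    simp only [Set.mem_setOf_eq]; omega
  have hU1 : (GV.w1 j, (1 : Fin 6)) ∈ {u : GV × Fin 6 | R u < r + 1} := by
    simp only [Set.mem_setOf_eq]; omega
  have hUs : (GV.s, (5 : Fin 6)) ∉ {u : GV × Fin 6 | R u < r + 1} := by
    simp only [Set.mem_setOf_eq]; omega
  have hm0 : (GV.w1 j, GV.w2 j) ∈ edgesOf (T 0) :=
    keyX hj (GC_old0 C n) (GC_new0 C n) hU0 (hT 0)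
  have hm1 : (GV.w1 j, GV.w2 j) ∈ edgesOf (T 1) :=
    keyX hj (GC_old1 C n) (GC_new1 C n) hU1 (hT 1)
  have hm5 : (GV.w1 j, GV.w2 j) ∈ edgesOf (T 5) :=
    keyB hj hUs (hT 5)
  have h2 := hcap (GV.w1 j) (GV.w2 j)
  rw [Fin.sum_univ_six] at h2
  rw [if_pos hm0, if_pos hm1, if_pos hm5] at h2
  have hcapv : (GC C n).cap (GV.w1 j) (GV.w2 j) = 2 := by
    show capC (GV.w1 j) (GV.w2 j) = 2
    simp [capC]
  rw [hcapv] at h2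
  have hd : ∀ i : Fin 6, (GC C n).demand i = 1 := fun _ => rfl
  rw [hd 0, hd 1, hd 5] at h2
  split_ifs at h2 <;> omega
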